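/- Let N be a left near-ring and d a multiplicative derivation of N. Then (x·d(y) + d(x)·y)·z = x·d(y)·z + d(x)·y·z for all x, y, z ∈ N. -/
import Mathlib

class LeftNearRing (N : Type*) extends AddGroup N, Mul N where
  mul_assoc : ∀ a b c : N, a * b * c = a * (b * c)
  left_distrib : ∀ a b c : N, a * (b + c) = a * b + a * c

theorem stmt1 {N : Type*} [LeftNearRing N] (d : N → N)
    (hd : ∀ x y : N, d (x * y) = x * d y + d x * y) :
    ∀ x y z : N, (x * d y + d x * y) * z = x * d y * z + d x * y * z := by
  intro x y z
  have h1 : d (x * y * z) = x * y * d z + (x * d y + d x * y) * z := by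
    rw [hd (x * y) z, hd x y]
  have h2 : d (x * y * z) = x * y * d z + (x * (d y * z) + d x * (y * z)) := by
    rw [LeftNearRing.mul_assoc x y z, hd x (y * z), hd y z,
      LeftNearRing.left_distrib, ← LeftNearRing.mul_assoc, add_assoc]
  have := h1.symm.trans h2
  have h3 := add_left_cancel this
  rw [h3, LeftNearRing.mul_assoc x (d y) z, LeftNearRing.mul_assoc (d x) y z]
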